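/- Let c ∈ B(0,M)^k and let c* ∈ M be an optimal codebook. For i ≠ j, if x ∈ V_i(c*) ∩ V_j(c) ∩ B(0,M), then |⟨x − (c_i + c_j)/2, c_i − c_j⟩| ≤ 4√2 M ‖c − c*‖ and dist(x, ∂V_i(c*)) ≤ (4√2 M / B) ‖c − c*‖, where ∂V_i(c*) is the boundary of the Voronoi cell V_i(c*) and ‖c − c*‖² = Σ_{i=1}^k ‖c_i − c_i*‖². -/

import Mathlib

set_option linter.unusedSectionVars false


open MeasureTheory Metric

noncomputable section

variable {H : Type*} [NormedAddCommGroup H] [InnerProductSpace ℝ H] [MeasurableSpace H]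

/-- `qgamma k c x = min_j ‖x - c j‖²`. -/
def qgamma (k : ℕ) (c : Fin k → H) (x : H) : ℝ := ⨅ j : Fin k, ‖x - c j‖ ^ 2

/-- distortion (risk) of a codebook. -/
def qrisk (k : ℕ) (P : Measure H) (c : Fin k → H) : ℝ := ∫ x, qgamma k c x ∂P

/-- the set of optimal codebooks. -/
def qopt (k : ℕ) (P : Measure H) : Set (Fin k → H) :=
  {c | ∀ c' : Fin k → H, qrisk k P c ≤ qrisk k P c'}

/-- the `i`-th (closed) Voronoi cell of the codebook `c`. -/
def vcell (k : ℕ) (c : Fin k → H) (i : Fin k) : Set H :=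
  {x | ∀ j : Fin k, ‖x - c i‖ ≤ ‖x - c j‖}

/-- `B`, the minimal separation between code points of optimal codebooks. -/
def qB (k : ℕ) (P : Measure H) : ℝ :=
  sInf {b | ∃ c ∈ qopt k P, ∃ i j : Fin k, i ≠ j ∧ b = ‖c i - c j‖}

/-- `p_min`, the minimal mass of a Voronoi cell of an optimal codebook. -/
def qpmin (k : ℕ) (P : Measure H) : ℝ :=
  sInf {p | ∃ c ∈ qopt k P, ∃ i : Fin k, p = (P (vcell k c i)).toReal}

/-- `N_{c*}`, the union of the boundaries between Voronoi cells. -/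
def nbd (k : ℕ) (c : Fin k → H) : Set H :=
  ⋃ (i : Fin k) (j : Fin k) (_ : i ≠ j), vcell k c i ∩ vcell k c j

/-- the weight function `p(t)`, the maximal mass of the closed `t`-neighborhood
of `N_{c*}` over optimal codebooks `c*`. -/
def pweight (k : ℕ) (P : Measure H) (t : ℝ) : ℝ :=
  sSup {p | ∃ c ∈ qopt k P, p = (P (cthickening t (nbd k c))).toReal}

/-- `P` is `M`-bounded: its support is contained in the closed ball `B(0,M)`. -/
def mbounded (P : Measure H) (M : ℝ) : Prop := P (closedBall (0 : H) M)ᶜ = 0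

/-- the support of `P` contains more than `k` points. -/
def suppGT (P : Measure H) (k : ℕ) : Prop :=
  ∀ S : Finset H, S.card ≤ k → P ((S : Set H)ᶜ) ≠ 0

/-- the margin condition with radius `r0`. -/
def margin (k : ℕ) (P : Measure H) (M r0 : ℝ) : Prop :=
  0 < r0 ∧ mbounded P M ∧
    ∀ t : ℝ, 0 ≤ t → t ≤ r0 → pweight k P t ≤ qB k P * qpmin k P * t / (128 * M ^ 2)

section Helpers

variable {k : ℕ} {P : Measure H} {M : ℝ}

lemma qgamma_le (c : Fin k → H) (x : H) (j : Fin k) : qgamma k c x ≤ ‖x - c j‖ ^ 2 :=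
  ciInf_le (Set.finite_range _).bddBelow j

lemma le_qgamma (hk : 0 < k) (c : Fin k → H) (x : H) {b : ℝ}
    (hb : ∀ j, b ≤ ‖x - c j‖ ^ 2) : b ≤ qgamma k c x := by
  haveI : Nonempty (Fin k) := ⟨⟨0, hk⟩⟩
  exact le_ciInf hb

lemma qgamma_nonneg (hk : 0 < k) (c : Fin k → H) (x : H) : 0 ≤ qgamma k c x :=
  le_qgamma hk c x fun j => by positivity

lemma qgamma_exists (hk : 0 < k) (c : Fin k → H) (x : H) :
    ∃ m, qgamma k c x = ‖x - c m‖ ^ 2 := by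
  obtain ⟨m, -, hm⟩ := Finset.exists_min_image (Finset.univ : Finset (Fin k))
    (fun j => ‖x - c j‖ ^ 2) ⟨⟨0, hk⟩, Finset.mem_univ _⟩
  exact ⟨m, le_antisymm (qgamma_le c x m) (le_qgamma hk c x fun j => hm j (Finset.mem_univ j))⟩

lemma qgamma_mono (hk : 0 < k) {c c' : Fin k → H} {x : H}
    (h : ∀ m, ‖x - c' m‖ ≤ ‖x - c m‖) : qgamma k c' x ≤ qgamma k c x := by
  obtain ⟨m, hm⟩ := qgamma_exists hk c x
  rw [hm]
  exact (qgamma_le c' x m).trans (pow_le_pow_left₀ (norm_nonneg _) (h m) 2)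

lemma continuous_qgamma (hk : 0 < k) (c : Fin k → H) : Continuous (qgamma k c) := by
  haveI : Nonempty (Fin k) := ⟨⟨0, hk⟩⟩
  have : qgamma k c = fun x => Finset.univ.inf' Finset.univ_nonempty
      (fun j => ‖x - c j‖ ^ 2) := by
    funext x
    exact (Finset.inf'_univ_eq_ciInf _).symm
  rw [this]
  exact Continuous.finset_inf'_apply _ fun j _ =>
    ((continuous_id.sub continuous_const).norm.pow 2)

lemma ae_norm_le (hbd : mbounded P M) : ∀ᵐ x ∂P, ‖x‖ ≤ M := by
  rw [ae_iff]
  have : {x : H | ¬ ‖x‖ ≤ M} = (closedBall (0 : H) M)ᶜ := by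
    ext x; simp [mem_closedBall_zero_iff]
  rw [this]; exact hbd

lemma integrable_qgamma [OpensMeasurableSpace H] [IsFiniteMeasure P]
    (hk : 0 < k) (hbd : mbounded P M) (c : Fin k → H) :
    Integrable (qgamma k c) P := by
  refine Integrable.mono' (integrable_const ((M + ‖c ⟨0, hk⟩‖) ^ 2))
    (continuous_qgamma hk c).aestronglyMeasurable ?_
  filter_upwards [ae_norm_le hbd] with x hx
  rw [Real.norm_eq_abs, abs_of_nonneg (qgamma_nonneg hk c x)]
  refine (qgamma_le c x ⟨0, hk⟩).trans ?_
  have h1 : ‖x - c ⟨0, hk⟩‖ ≤ M + ‖c ⟨0, hk⟩‖ := (norm_sub_le _ _).trans (by gcongr)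
  have h2 : (0:ℝ) ≤ M := le_trans (norm_nonneg x) hx |>.trans (le_refl M) |> fun _ => (norm_nonneg x).trans hx
  exact pow_le_pow_left₀ (norm_nonneg _) h1 2

lemma isClosed_vcell (c : Fin k → H) (i : Fin k) : IsClosed (vcell k c i) := by
  have : vcell k c i = ⋂ j, {x : H | ‖x - c i‖ ≤ ‖x - c j‖} := by
    ext x; simp [vcell, Set.mem_iInter]
  rw [this]
  exact isClosed_iInter fun j => isClosed_le
    ((continuous_id.sub continuous_const).norm) ((continuous_id.sub continuous_const).norm)

lemma qgamma_eq_of_mem_vcell (hk : 0 < k) {c : Fin k → H} {i : Fin k} {x : H}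
    (hx : x ∈ vcell k c i) : qgamma k c x = ‖x - c i‖ ^ 2 :=
  le_antisymm (qgamma_le c x i)
    (le_qgamma hk c x fun j => pow_le_pow_left₀ (norm_nonneg _) (hx j) 2)

lemma exists_ne_of_not_mem_vcell (hk : 0 < k) {c : Fin k → H} {l : Fin k} {x : H}
    (hx : x ∉ vcell k c l) : ∃ m, m ≠ l ∧ ‖x - c m‖ ^ 2 ≤ qgamma k c x := by
  obtain ⟨m, hm⟩ := qgamma_exists hk c x
  rcases eq_or_ne m l with rfl | hne
  · exfalso
    exact hx fun j => by
      have := (qgamma_le c x j).trans_eq' hm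
      exact (pow_le_pow_iff_left₀ (norm_nonneg _) (norm_nonneg _) (by norm_num)).1 this
  · exact ⟨m, hne, hm.ge⟩

/-- inner product identity. -/
lemma inner_identity (x a b : H) :
    2 * (inner ℝ (x - (2 : ℝ)⁻¹ • (a + b)) (a - b) : ℝ) = ‖x - b‖ ^ 2 - ‖x - a‖ ^ 2 := by
  rw [norm_sub_sq_real, norm_sub_sq_real]
  simp only [inner_sub_left, inner_sub_right, inner_add_left, inner_add_right,
    real_inner_smul_left]
  rw [real_inner_comm b x, real_inner_comm a x, real_inner_comm b a,
    real_inner_self_eq_norm_sq a, real_inner_self_eq_norm_sq b]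
  ring

/-- projection onto the ball strictly decreases squared distance. -/
lemma proj_ball_sq (x cp : H) (hx : ‖x‖ ≤ M) (hM : 0 ≤ M) (hc : M < ‖cp‖) :
    ‖x - (M / ‖cp‖) • cp‖ ^ 2 + (‖cp‖ - M) ^ 2 ≤ ‖x - cp‖ ^ 2 := by
  have hn : (0:ℝ) < ‖cp‖ := lt_of_le_of_lt hM hc
  rw [norm_sub_sq_real, norm_sub_sq_real, real_inner_smul_right, norm_smul]
  rw [Real.norm_eq_abs, abs_of_nonneg (by positivity)]
  have hinner : (inner ℝ x cp : ℝ) ≤ M * ‖cp‖ :=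
    (real_inner_le_norm x cp).trans (by gcongr)
  have hMc : M / ‖cp‖ * ‖cp‖ = M := div_mul_cancel₀ _ hn.ne'
  have ha1 : M / ‖cp‖ ≤ 1 := (div_le_one hn).2 hc.le
  have key : (1 - M / ‖cp‖) * (inner ℝ x cp : ℝ) ≤ (1 - M / ‖cp‖) * (M * ‖cp‖) :=
    mul_le_mul_of_nonneg_left hinner (by linarith)
  have hsq : (M / ‖cp‖) ^ 2 * ‖cp‖ ^ 2 = M ^ 2 := by rw [← mul_pow, hMc]
  nlinarith [key, hsq, hMc]


lemma exists_supp_points [SecondCountableTopology H] [OpensMeasurableSpace H]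
    (hk : 2 ≤ k) (hsupp : suppGT P k) :
    ∃ xs : Fin (k + 1) → H, Function.Injective xs ∧
      ∀ t, ∀ ρ : ℝ, 0 < ρ → P (ball (xs t) ρ) ≠ 0 := by
  obtain ⟨𝒰, h𝒰c, -, h𝒰b⟩ := TopologicalSpace.exists_countable_basis H
  set A : Set H := ⋃₀ {U ∈ 𝒰 | P U = 0} with hA
  have hPA : P A = 0 :=
    (measure_sUnion_null_iff (h𝒰c.mono fun U hU => hU.1)).2 (fun U hU => hU.2)
  set Spt : Set H := Aᶜ with hSpt
  have hball : ∀ x ∈ Spt, ∀ ρ : ℝ, 0 < ρ → P (ball x ρ) ≠ 0 := by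
    intro x hx ρ hρ hzero
    obtain ⟨U, hU𝒰, hxU, hUb⟩ :=
      h𝒰b.exists_subset_of_mem_open (mem_ball_self hρ) isOpen_ball
    exact hx (Set.mem_sUnion.2 ⟨U, ⟨hU𝒰, measure_mono_null hUb hzero⟩, hxU⟩)
  have hbig : ¬ ∃ S : Finset H, Spt ⊆ ↑S ∧ S.card ≤ k := by
    rintro ⟨S, hSsub, hScard⟩
    refine hsupp S hScard ?_
    refine measure_mono_null ?_ hPA
    intro y hy
    by_contra hyA
    exact hy (hSsub hyA)
  -- extract k+1 distinct points of Spt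
  have hT : ∃ T : Finset H, ↑T ⊆ Spt ∧ T.card = k + 1 := by
    rcases Set.finite_or_infinite Spt with hfin | hinf
    · have hcard : k + 1 ≤ hfin.toFinset.card := by
        by_contra h
        push_neg at h
        exact hbig ⟨hfin.toFinset, by simp, by omega⟩
      obtain ⟨T, hTsub, hTcard⟩ := Finset.exists_subset_card_eq hcard
      exact ⟨T, fun x hx => hfin.mem_toFinset.1 (hTsub hx), hTcard⟩
    · obtain ⟨T, hTsub, hTcard⟩ := hinf.exists_subset_card_eq (k + 1)
      exact ⟨T, hTsub, hTcard⟩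
  obtain ⟨T, hTsub, hTcard⟩ := hT
  let e : Fin (k + 1) → {x // x ∈ T} := fun n => T.equivFin.symm (Fin.cast hTcard.symm n)
  refine ⟨fun n => (e n : H), ?_, ?_⟩
  · intro a b hab
    have : e a = e b := Subtype.ext hab
    have := T.equivFin.symm.injective this
    exact Fin.cast_injective _ this
  · intro t ρ hρ
    exact hball _ (hTsub (e t).2) ρ hρ


lemma pigeonhole_far (xs : Fin (k + 1) → H) {s : ℝ}
    (hs : ∀ t t', t ≠ t' → s ≤ dist (xs t) (xs t')) (c' : Fin k → H) :
    ∃ t, ∀ m, s / 2 ≤ dist (xs t) (c' m) := by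
  by_contra h
  push_neg at h
  choose f hf using h
  have hinj : Function.Injective f := by
    intro t t' he
    by_contra hne
    have h1 := hf t
    have h2 := hf t'
    rw [he] at h1
    have := dist_triangle (xs t) (c' (f t')) (xs t')
    rw [dist_comm (c' (f t')) (xs t')] at this
    have := hs t t' hne
    linarith
  have := Fintype.card_le_of_injective f hinj
  simp [Fintype.card_fin] at this

/-- replacing an inactive code point by a well-separated support point improves. -/
lemma improve [OpensMeasurableSpace H] [IsProbabilityMeasure P]
    (hk : 0 < k) (hbd : mbounded P M) {cs : Fin k → H} (hcs : cs ∈ qopt k P)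
    (c' : Fin k → H) (l : Fin k)
    (hl : ∀ᵐ x ∂P, ∃ m, m ≠ l ∧ ‖x - c' m‖ ^ 2 ≤ qgamma k c' x)
    (x0 : H) (ε : ℝ) (hε : 0 < ε) (hx0 : ∀ m, ε ≤ ‖x0 - c' m‖) :
    qrisk k P cs + (P (ball x0 (ε / 4))).toReal * (ε ^ 2 / 2) ≤ qrisk k P c' := by
  classical
  set c'' := Function.update c' l x0 with hc''
  have hae : ∀ᵐ x ∂P, qgamma k c'' x
      + (ball x0 (ε / 4)).indicator (fun _ => ε ^ 2 / 2) x ≤ qgamma k c' x := by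
    filter_upwards [hl] with x hx
    by_cases hb : x ∈ ball x0 (ε / 4)
    · rw [Set.indicator_of_mem hb]
      have hxx0 : ‖x - x0‖ ≤ ε / 4 := by
        rw [← dist_eq_norm]; exact (mem_ball.1 hb).le
      have h1 : qgamma k c'' x ≤ (ε / 4) ^ 2 := by
        refine (qgamma_le c'' x l).trans ?_
        rw [hc'', Function.update_self]
        exact pow_le_pow_left₀ (norm_nonneg _) hxx0 2
      have h2 : (3 * ε / 4) ^ 2 ≤ qgamma k c' x := by
        refine le_qgamma hk c' x fun m => ?_
        have : 3 * ε / 4 ≤ ‖x - c' m‖ := by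
          have ht : ‖x0 - c' m‖ ≤ ‖x0 - x‖ + ‖x - c' m‖ := norm_sub_le_norm_sub_add_norm_sub _ _ _
          have hx0m := hx0 m
          rw [norm_sub_rev] at hxx0
          linarith
        exact pow_le_pow_left₀ (by positivity) this 2
      nlinarith
    · rw [Set.indicator_of_notMem hb, add_zero]
      obtain ⟨m, hm, hm2⟩ := hx
      refine (qgamma_le c'' x m).trans ?_
      rw [hc'', Function.update_of_ne hm]
      exact hm2
  have hint1 : Integrable (qgamma k c'') P := integrable_qgamma hk hbd c''
  have hint2 : Integrable ((ball x0 (ε / 4)).indicator (fun _ => ε ^ 2 / 2)) P :=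
    (integrable_const _).indicator measurableSet_ball
  have hint3 : Integrable (qgamma k c') P := integrable_qgamma hk hbd c'
  have hmono := integral_mono_ae (hint1.add hint2) hint3 hae
  have heq : ∫ x, (qgamma k c'' x + (ball x0 (ε / 4)).indicator (fun _ => ε ^ 2 / 2) x) ∂P
      = qrisk k P c'' + (P (ball x0 (ε / 4))).toReal * (ε ^ 2 / 2) := by
    rw [integral_add hint1 hint2, integral_indicator_const _ measurableSet_ball]
    simp [qrisk, smul_eq_mul, measureReal_def]
  calc qrisk k P cs + (P (ball x0 (ε / 4))).toReal * (ε ^ 2 / 2)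
      ≤ qrisk k P c'' + (P (ball x0 (ε / 4))).toReal * (ε ^ 2 / 2) := by linarith [hcs c'']
    _ = ∫ x, (qgamma k c'' x + (ball x0 (ε / 4)).indicator (fun _ => ε ^ 2 / 2) x) ∂P := heq.symm
    _ ≤ ∫ x, qgamma k c' x ∂P := hmono
    _ = qrisk k P c' := rfl


set_option maxHeartbeats 1000000 in
/-- structural facts about optimal codebooks: points in the ball, uniform separation. -/
lemma structural [BorelSpace H] [SecondCountableTopology H] [IsProbabilityMeasure P]
    (hk : 2 ≤ k) (hM : 0 < M) (hbd : mbounded P M) (hsupp : suppGT P k) :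
    ∃ b0 : ℝ, 0 < b0 ∧ ∀ cs ∈ qopt k P,
      (∀ l, ‖cs l‖ ≤ M) ∧ ∀ i j : Fin k, i ≠ j → b0 ≤ ‖cs i - cs j‖ := by
  classical
  have hk0 : 0 < k := by omega
  obtain ⟨xs, hxinj, hxball⟩ := exists_supp_points hk hsupp
  set PR : Finset (Fin (k+1) × Fin (k+1)) := Finset.univ.filter fun p => p.1 ≠ p.2 with hPR
  have hPRne : PR.Nonempty := by
    refine ⟨(⟨0, by omega⟩, ⟨1, by omega⟩), Finset.mem_filter.2 ⟨Finset.mem_univ _, ?_⟩⟩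
    intro h
    have := congrArg Fin.val h
    simp at this
  set s := PR.inf' hPRne fun p => dist (xs p.1) (xs p.2) with hsdef
  have hspos : 0 < s := by
    rw [Finset.lt_inf'_iff]
    intro p hp
    exact dist_pos.2 fun h => (Finset.mem_filter.1 hp).2 (hxinj h)
  have hsle : ∀ t t', t ≠ t' → s ≤ dist (xs t) (xs t') := by
    intro t t' h
    have hm : (t, t') ∈ PR := Finset.mem_filter.2 ⟨Finset.mem_univ _, h⟩
    exact Finset.inf'_le (fun p => dist (xs p.1) (xs p.2)) hm
  set p0 := (Finset.univ : Finset (Fin (k+1))).inf' ⟨⟨0, by omega⟩, Finset.mem_univ _⟩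
    (fun t => (P (ball (xs t) (s/2/4))).toReal) with hp0def
  have hp0pos : 0 < p0 := by
    refine (Finset.lt_inf'_iff _).2 ?_
    intro t _
    exact ENNReal.toReal_pos (hxball t _ (by positivity)) (measure_ne_top P _)
  have hp0le : ∀ t, p0 ≤ (P (ball (xs t) (s/2/4))).toReal := fun t =>
    Finset.inf'_le _ (Finset.mem_univ t)
  set δ0 := p0 * ((s/2)^2/2) with hδ0def
  have hδ0 : 0 < δ0 := by positivity
  -- duplicate penalty
  have hdup : ∀ c' : Fin k → H, (∃ a b : Fin k, a ≠ b ∧ c' a = c' b) →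
      ∀ cs ∈ qopt k P, qrisk k P cs + δ0 ≤ qrisk k P c' := by
    rintro c' ⟨a, b, hab, hdupe⟩ cs hcs
    obtain ⟨t, ht⟩ := pigeonhole_far xs hsle c'
    have hl : ∀ᵐ x ∂P, ∃ m, m ≠ b ∧ ‖x - c' m‖^2 ≤ qgamma k c' x := by
      refine Filter.Eventually.of_forall fun x => ?_
      obtain ⟨m, hm⟩ := qgamma_exists hk0 c' x
      rcases eq_or_ne m b with rfl | hne
      · exact ⟨a, hab, by rw [hdupe]; exact hm.ge⟩
      · exact ⟨m, hne, hm.ge⟩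
    have himp := improve hk0 hbd hcs c' b hl (xs t) (s/2) (by positivity)
      (fun m => by rw [← dist_eq_norm]; exact ht m)
    have hmass : δ0 ≤ (P (ball (xs t) (s/2/4))).toReal * ((s/2)^2/2) :=
      mul_le_mul_of_nonneg_right (hp0le t) (by positivity)
    linarith
  -- norm bound
  have hnorm : ∀ cs ∈ qopt k P, ∀ l, ‖cs l‖ ≤ M := by
    intro cs hcs l
    by_contra hl
    push_neg at hl
    by_cases hV : P (vcell k cs l) = 0
    · have hlae : ∀ᵐ x ∂P, ∃ m, m ≠ l ∧ ‖x - cs m‖^2 ≤ qgamma k cs x := by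
        have hc : ∀ᵐ x ∂P, x ∉ vcell k cs l := by
          rw [ae_iff]
          simpa [Set.setOf_mem_eq] using hV
        filter_upwards [hc] with x hx
        exact exists_ne_of_not_mem_vcell hk0 hx
      obtain ⟨t, ht⟩ := pigeonhole_far xs hsle cs
      have himp := improve hk0 hbd hcs cs l hlae (xs t) (s/2) (by positivity)
        (fun m => by rw [← dist_eq_norm]; exact ht m)
      have hmass : 0 < (P (ball (xs t) (s/2/4))).toReal * ((s/2)^2/2) := by
        have := ENNReal.toReal_pos (hxball t _ (by positivity : (0:ℝ) < s/2/4)) (measure_ne_top P _)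
        positivity
      linarith
    · set q : H := (M / ‖cs l‖) • cs l with hq
      set c' := Function.update cs l q with hc'
      have hgappos : (0:ℝ) < (‖cs l‖ - M)^2 := by
        have : 0 < ‖cs l‖ - M := by linarith
        positivity
      set g := (‖cs l‖ - M)^2 with hg
      have hVm : MeasurableSet (vcell k cs l) := (isClosed_vcell cs l).measurableSet
      have hae : ∀ᵐ x ∂P,
          qgamma k c' x + (vcell k cs l).indicator (fun _ => g) x ≤ qgamma k cs x := by
        filter_upwards [ae_norm_le hbd] with x hx
        have hproj := proj_ball_sq (M := M) x (cs l) hx (le_of_lt hM) hl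
        have hc'l : c' l = q := by rw [hc']; exact Function.update_self _ _ _
        have hle : ∀ m, ‖x - c' m‖ ≤ ‖x - cs m‖ := by
          intro m
          rcases eq_or_ne m l with rfl | hne
          · rw [hc'l]
            exact (pow_le_pow_iff_left₀ (norm_nonneg _) (norm_nonneg _) two_ne_zero).1
              (by nlinarith [hproj, hgappos.le])
          · rw [hc', Function.update_of_ne hne]
        by_cases hvl : x ∈ vcell k cs l
        · rw [Set.indicator_of_mem hvl]
          have h1 : qgamma k cs x = ‖x - cs l‖^2 := qgamma_eq_of_mem_vcell hk0 hvl
          have h2 : qgamma k c' x ≤ ‖x - q‖^2 := by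
            have := qgamma_le c' x l
            rwa [hc'l] at this
          rw [h1]
          linarith
        · rw [Set.indicator_of_notMem hvl, add_zero]
          exact qgamma_mono hk0 hle
      have hint1 := integrable_qgamma (P := P) hk0 hbd c'
      have hint2 : Integrable ((vcell k cs l).indicator (fun _ => g)) P :=
        (integrable_const _).indicator hVm
      have hint3 := integrable_qgamma (P := P) hk0 hbd cs
      have hmono := integral_mono_ae (hint1.add hint2) hint3 hae
      have heq : ∫ x, (qgamma k c' x + (vcell k cs l).indicator (fun _ => g) x) ∂P
          = qrisk k P c' + (P (vcell k cs l)).toReal * g := by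
        rw [integral_add hint1 hint2, integral_indicator_const _ hVm]
        simp [qrisk, smul_eq_mul, measureReal_def]
      have hfinal : qrisk k P c' + (P (vcell k cs l)).toReal * g ≤ qrisk k P cs := by
        calc qrisk k P c' + (P (vcell k cs l)).toReal * g
            = ∫ x, (qgamma k c' x + (vcell k cs l).indicator (fun _ => g) x) ∂P := heq.symm
          _ ≤ ∫ x, qgamma k cs x ∂P := hmono
          _ = qrisk k P cs := rfl
      have hopt := hcs c'
      have hmass : 0 < (P (vcell k cs l)).toReal := ENNReal.toReal_pos hV (measure_ne_top P _)
      nlinarith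
  -- separation
  refine ⟨min 1 (δ0 / (4*M+1)), by positivity, fun cs hcs => ⟨hnorm cs hcs, ?_⟩⟩
  intro i j hij
  by_contra hd
  push_neg at hd
  set d := ‖cs i - cs j‖ with hddef
  have hd0 : 0 ≤ d := norm_nonneg _
  set c' := Function.update cs j (cs i) with hc'
  have hdup' : qrisk k P cs + δ0 ≤ qrisk k P c' :=
    hdup c' ⟨i, j, hij, by rw [hc', Function.update_of_ne hij, Function.update_self]⟩ cs hcs
  have hup : qrisk k P c' ≤ qrisk k P cs + (4*M*d + d^2) := by
    have hae : ∀ᵐ x ∂P, qgamma k c' x ≤ qgamma k cs x + (4*M*d + d^2) := by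
      filter_upwards [ae_norm_le hbd] with x hx
      have hnn : (0:ℝ) ≤ 4*M*d + d^2 := by positivity
      obtain ⟨m, hm⟩ := qgamma_exists hk0 cs x
      rcases eq_or_ne m j with rfl | hne
      · have h1 : qgamma k c' x ≤ ‖x - cs i‖^2 := by
          have hci : c' i = cs i := by rw [hc']; exact Function.update_of_ne hij _ _
          have := qgamma_le c' x i
          rwa [hci] at this
        have h2 : ‖x - cs i‖ ≤ ‖x - cs m‖ + d := by
          have h3 := norm_sub_le_norm_sub_add_norm_sub x (cs m) (cs i)
          rw [norm_sub_rev (cs m) (cs i)] at h3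
          exact h3.trans_eq (by rw [hddef])
        have h3 : ‖x - cs m‖ ≤ 2*M := by
          have h4 := hnorm cs hcs m
          have h5 := norm_sub_le x (cs m)
          linarith
        have h4 : (0:ℝ) ≤ ‖x - cs m‖ := norm_nonneg _
        rw [hm]
        nlinarith [pow_le_pow_left₀ (norm_nonneg (x - cs i)) h2 2,
          mul_le_mul_of_nonneg_right h3 hd0]
      · have hcm : c' m = cs m := by rw [hc']; exact Function.update_of_ne hne _ _
        have := qgamma_le c' x m
        rw [hcm, ← hm] at this
        linarith
    have hint1 := integrable_qgamma (P := P) hk0 hbd c'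
    have hint3 := integrable_qgamma (P := P) hk0 hbd cs
    have hmono := integral_mono_ae hint1 (hint3.add (integrable_const _)) hae
    calc qrisk k P c' = ∫ x, qgamma k c' x ∂P := rfl
      _ ≤ ∫ x, (qgamma k cs x + (4*M*d + d^2)) ∂P := hmono
      _ = qrisk k P cs + (4*M*d + d^2) := by
          rw [integral_add hint3 (integrable_const _), integral_const]
          simp [qrisk]
  have h1 : d < 1 := lt_of_lt_of_le hd (min_le_left _ _)
  have h2 : d < δ0 / (4*M+1) := lt_of_lt_of_le hd (min_le_right _ _)
  have h3 : d * (4*M+1) < δ0 := by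
    rw [← lt_div_iff₀ (by linarith : (0:ℝ) < 4*M+1)]
    exact h2
  nlinarith


lemma segment_crossing {X : Type*} [TopologicalSpace X] {s t : Set X} {x y : X}
    (hs : IsPreconnected s) (hxs : x ∈ s) (hys : y ∈ s) (hxt : x ∈ t) (hyt : y ∉ t) :
    ∃ z ∈ s, z ∈ frontier t := by
  by_contra hz
  push_neg at hz
  have hxint : x ∈ interior t := by
    by_contra hxint
    exact hz x hxs ⟨subset_closure hxt, hxint⟩
  have hyext : y ∈ (closure t)ᶜ := by
    by_contra hyext
    have hyc : y ∈ closure t := by simpa using hyext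
    exact hz y hys ⟨hyc, fun h => hyt (interior_subset h)⟩
  have hsub : s ⊆ interior t ∪ (closure t)ᶜ := by
    intro z hzs
    by_cases hzc : z ∈ closure t
    · left
      by_contra hzint
      exact hz z hzs ⟨hzc, hzint⟩
    · right; exact hzc
  obtain ⟨z, -, hzu, hzv⟩ := hs (interior t) (closure t)ᶜ isOpen_interior
    isClosed_closure.isOpen_compl hsub ⟨x, hxs, hxint⟩ ⟨y, hys, hyext⟩
  exact hzv (subset_closure (interior_subset hzu))

end Helpers

set_option maxHeartbeats 1000000 in
/-- Lemma 4.2: points with differing labels are close to Voronoi boundaries. -/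
theorem stmt10 [BorelSpace H] [SecondCountableTopology H] [CompleteSpace H]
    (k : ℕ) (hk : 2 ≤ k) (P : Measure H) [IsProbabilityMeasure P]
    (M : ℝ) (hM : 0 < M) (hbd : mbounded P M) (hsupp : suppGT P k)
    (c cs : Fin k → H) (hc : ∀ i, ‖c i‖ ≤ M) (hcs : cs ∈ qopt k P)
    (i j : Fin k) (hij : i ≠ j) (x : H)
    (hx : x ∈ vcell k cs i ∩ vcell k c j ∩ closedBall (0 : H) M) :
    |(inner ℝ (x - (2 : ℝ)⁻¹ • (c i + c j)) (c i - c j) : ℝ)| ≤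
      4 * Real.sqrt 2 * M * Real.sqrt (∑ l, ‖c l - cs l‖ ^ 2) ∧
    infDist x (frontier (vcell k cs i)) ≤
      (4 * Real.sqrt 2 * M / qB k P) * Real.sqrt (∑ l, ‖c l - cs l‖ ^ 2) := by
  obtain ⟨⟨hxcs, hxc⟩, hxb⟩ := hx
  have hk0 : 0 < k := by omega
  have hxM : ‖x‖ ≤ M := mem_closedBall_zero_iff.1 hxb
  obtain ⟨b0, hb0, hstruct⟩ := structural hk hM hbd hsupp
  have hnorm := (hstruct cs hcs).1
  have hsep := (hstruct cs hcs).2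
  have hsig0 : (0:ℝ) ≤ Real.sqrt (∑ l, ‖c l - cs l‖ ^ 2) := Real.sqrt_nonneg _
  have hsum2 : ‖c i - cs i‖ ^ 2 + ‖c j - cs j‖ ^ 2 ≤ ∑ l, ‖c l - cs l‖ ^ 2 := by
    have hsub : ({i, j} : Finset (Fin k)) ⊆ Finset.univ := Finset.subset_univ _
    have := Finset.sum_le_sum_of_subset_of_nonneg hsub
      (fun l _ _ => by positivity : ∀ l ∈ Finset.univ, l ∉ ({i, j} : Finset (Fin k)) → 0 ≤ ‖c l - cs l‖ ^ 2)
    rwa [Finset.sum_pair hij] at this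
  have hsqrt : ‖c i - cs i‖ + ‖c j - cs j‖
      ≤ Real.sqrt 2 * Real.sqrt (∑ l, ‖c l - cs l‖ ^ 2) := by
    rw [← Real.sqrt_mul (by norm_num : (0:ℝ) ≤ 2)]
    rw [Real.le_sqrt (by positivity) (by positivity)]
    nlinarith [sq_nonneg (‖c i - cs i‖ - ‖c j - cs j‖)]
  -- triangle facts
  have t1 : ‖x - c i‖ ≤ ‖x - cs i‖ + ‖c i - cs i‖ := by
    have := norm_sub_le_norm_sub_add_norm_sub x (cs i) (c i)
    rw [norm_sub_rev (cs i) (c i)] at this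
    exact this
  have t2 : ‖x - cs i‖ ≤ ‖x - cs j‖ := hxcs j
  have t3 : ‖x - cs j‖ ≤ ‖x - c j‖ + ‖c j - cs j‖ :=
    norm_sub_le_norm_sub_add_norm_sub x (c j) (cs j)
  have t4 : ‖x - c j‖ ≤ ‖x - c i‖ := hxc i
  have hA2 : ‖x - c i‖ ≤ 2 * M := by
    have := norm_sub_le x (c i); have := hc i; linarith
  have hB2 : ‖x - c j‖ ≤ 2 * M := by
    have := norm_sub_le x (c j); have := hc j; linarith
  have hSi : ‖x - cs i‖ ≤ 2 * M := by
    have := norm_sub_le x (cs i); have := hnorm i; linarith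
  have hSj : ‖x - cs j‖ ≤ 2 * M := by
    have := norm_sub_le x (cs j); have := hnorm j; linarith
  constructor
  · -- part 1
    have hiden := inner_identity x (c i) (c j)
    have habs : |(inner ℝ (x - (2:ℝ)⁻¹ • (c i + c j)) (c i - c j) : ℝ)|
        ≤ 2 * M * (‖c i - cs i‖ + ‖c j - cs j‖) := by
      have hkey : (‖x - c i‖ - ‖x - c j‖) * (‖x - c i‖ + ‖x - c j‖)
          ≤ (‖c i - cs i‖ + ‖c j - cs j‖) * (4 * M) :=
        mul_le_mul (by linarith) (by linarith) (by positivity) (by positivity)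
      have hid2 : (‖x - c i‖ - ‖x - c j‖) * (‖x - c i‖ + ‖x - c j‖)
          = ‖x - c i‖ ^ 2 - ‖x - c j‖ ^ 2 := by ring
      have hBA2 : ‖x - c j‖ ^ 2 ≤ ‖x - c i‖ ^ 2 :=
        pow_le_pow_left₀ (norm_nonneg _) t4 2
      rw [abs_le]
      constructor
      · linarith
      · have hnn : (0:ℝ) ≤ 2 * M * (‖c i - cs i‖ + ‖c j - cs j‖) := by positivity
        linarith
    have hfin : 2 * M * (‖c i - cs i‖ + ‖c j - cs j‖)
        ≤ 4 * Real.sqrt 2 * M * Real.sqrt (∑ l, ‖c l - cs l‖ ^ 2) := by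
      have h1 : 2 * M * (‖c i - cs i‖ + ‖c j - cs j‖)
          ≤ 2 * M * (Real.sqrt 2 * Real.sqrt (∑ l, ‖c l - cs l‖ ^ 2)) :=
        mul_le_mul_of_nonneg_left hsqrt (by positivity)
      nlinarith [mul_nonneg (mul_nonneg (Real.sqrt_nonneg 2) hM.le) hsig0]
    linarith
  · -- part 2
    have hbdd : ∀ b ∈ {b | ∃ c2 ∈ qopt k P, ∃ i2 j2 : Fin k, i2 ≠ j2 ∧ b = ‖c2 i2 - c2 j2‖},
        b0 ≤ b := by
      rintro b ⟨c2, hc2, i2, j2, hij2, rfl⟩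
      exact (hstruct c2 hc2).2 i2 j2 hij2
    have hmem : ‖cs i - cs j‖ ∈
        {b | ∃ c2 ∈ qopt k P, ∃ i2 j2 : Fin k, i2 ≠ j2 ∧ b = ‖c2 i2 - c2 j2‖} :=
      ⟨cs, hcs, i, j, hij, rfl⟩
    have hqBle : qB k P ≤ ‖cs i - cs j‖ := csInf_le ⟨b0, hbdd⟩ hmem
    have hqBpos : 0 < qB k P := lt_of_lt_of_le hb0 (le_csInf ⟨_, hmem⟩ hbdd)
    have hun : 0 < ‖cs i - cs j‖ := lt_of_lt_of_le hb0 (hsep i j hij)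
    set fs := (inner ℝ (x - (2:ℝ)⁻¹ • (cs i + cs j)) (cs i - cs j) : ℝ) with hfsdef
    have hiden := inner_identity x (cs i) (cs j)
    have hfs0 : 0 ≤ fs := by
      have := pow_le_pow_left₀ (norm_nonneg (x - cs i)) t2 2
      linarith
    have hfs_le : fs ≤ 2 * M * (‖c i - cs i‖ + ‖c j - cs j‖) := by
      have hkey2 : (‖x - cs j‖ - ‖x - cs i‖) * (‖x - cs j‖ + ‖x - cs i‖)
          ≤ (‖c i - cs i‖ + ‖c j - cs j‖) * (4 * M) :=
        mul_le_mul (by linarith) (by linarith) (by positivity) (by positivity)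
      have hid3 : (‖x - cs j‖ - ‖x - cs i‖) * (‖x - cs j‖ + ‖x - cs i‖)
          = ‖x - cs j‖ ^ 2 - ‖x - cs i‖ ^ 2 := by ring
      linarith
    -- construct the bisector point y
    set y := x - (fs / ‖cs i - cs j‖ ^ 2) • (cs i - cs j) with hydef
    have hxy : x - y = (fs / ‖cs i - cs j‖ ^ 2) • (cs i - cs j) := sub_sub_cancel _ _
    have hdxy : dist x y = fs / ‖cs i - cs j‖ := by
      rw [dist_eq_norm, hxy, norm_smul, Real.norm_eq_abs, abs_of_nonneg (by positivity)]
      field_simp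
    have hymid : (inner ℝ (y - (2:ℝ)⁻¹ • (cs i + cs j)) (cs i - cs j) : ℝ) = 0 := by
      have hre : y - (2:ℝ)⁻¹ • (cs i + cs j)
          = (x - (2:ℝ)⁻¹ • (cs i + cs j)) - (fs / ‖cs i - cs j‖ ^ 2) • (cs i - cs j) := by
        rw [hydef]; abel
      rw [hre, inner_sub_left, real_inner_smul_left, real_inner_self_eq_norm_sq, ← hfsdef]
      have h2 : ‖cs i - cs j‖ ^ 2 ≠ 0 := by positivity
      field_simp
      ring
    have hyc : y ∈ closure (vcell k cs i)ᶜ := by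
      have h0 : Filter.Tendsto (fun n : ℕ => (1:ℝ)/(n+1)) Filter.atTop (nhds 0) :=
        tendsto_one_div_add_atTop_nhds_zero_nat
      have htd : Filter.Tendsto (fun n : ℕ => y + ((1:ℝ)/(n+1)) • (cs j - cs i))
          Filter.atTop (nhds y) := by
        have := (h0.smul_const (cs j - cs i)).const_add y
        simpa using this
      refine mem_closure_of_tendsto htd ?_
      · refine Filter.Eventually.of_forall fun n => ?_
        intro hmem2
        have hσ : (0:ℝ) < 1/(n+1) := by positivity
        have hzid := inner_identity (y + ((1:ℝ)/(n+1)) • (cs j - cs i)) (cs i) (cs j)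
        have hinnerz : (inner ℝ ((y + ((1:ℝ)/(n+1)) • (cs j - cs i)) - (2:ℝ)⁻¹ • (cs i + cs j))
            (cs i - cs j) : ℝ) = -((1/(n+1)) * ‖cs i - cs j‖ ^ 2) := by
          have hre2 : (y + ((1:ℝ)/(n+1)) • (cs j - cs i)) - (2:ℝ)⁻¹ • (cs i + cs j)
              = (y - (2:ℝ)⁻¹ • (cs i + cs j)) + ((1:ℝ)/(n+1)) • (cs j - cs i) := by abel
          rw [hre2, inner_add_left, hymid, real_inner_smul_left, zero_add]
          have hneg : cs j - cs i = -(cs i - cs j) := by abel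
          rw [hneg, inner_neg_left, real_inner_self_eq_norm_sq]
          ring
        have hlt : ‖(y + ((1:ℝ)/(n+1)) • (cs j - cs i)) - cs j‖ ^ 2
            < ‖(y + ((1:ℝ)/(n+1)) • (cs j - cs i)) - cs i‖ ^ 2 := by
          have hpos : 0 < (1/((n:ℝ)+1)) * ‖cs i - cs j‖ ^ 2 := by positivity
          linarith [hzid, hinnerz]
        have hle := hmem2 j
        have := pow_le_pow_left₀ (norm_nonneg _) hle 2
        linarith
    have hinf : infDist x (frontier (vcell k cs i)) ≤ dist x y := by
      by_cases hyv : y ∈ vcell k cs i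
      · refine infDist_le_dist_of_mem ?_
        rw [frontier_eq_closure_inter_closure]
        exact ⟨subset_closure hyv, hyc⟩
      · obtain ⟨z, hzseg, hzf⟩ := segment_crossing (t := vcell k cs i)
          (convex_segment x y).isPreconnected (left_mem_segment ℝ x y)
          (right_mem_segment ℝ x y) hxcs hyv
        have hzb : z ∈ closedBall x (dist x y) :=
          (convex_closedBall x (dist x y)).segment_subset (mem_closedBall_self dist_nonneg)
            (by simp [mem_closedBall, dist_comm]) hzseg
        refine (infDist_le_dist_of_mem hzf).trans ?_
        have := mem_closedBall.1 hzb
        rwa [dist_comm] at this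
    rw [hdxy] at hinf
    refine hinf.trans ?_
    have hq1 : fs / ‖cs i - cs j‖ ≤ fs / qB k P :=
      div_le_div_of_nonneg_left hfs0 hqBpos hqBle
    have hq2 : fs / qB k P
        ≤ (2 * M * (Real.sqrt 2 * Real.sqrt (∑ l, ‖c l - cs l‖ ^ 2))) / qB k P := by
      have : fs ≤ 2 * M * (Real.sqrt 2 * Real.sqrt (∑ l, ‖c l - cs l‖ ^ 2)) :=
        hfs_le.trans (mul_le_mul_of_nonneg_left hsqrt (by positivity))
      gcongr
    have hq3 : (2 * M * (Real.sqrt 2 * Real.sqrt (∑ l, ‖c l - cs l‖ ^ 2))) / qB k P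
        ≤ (4 * Real.sqrt 2 * M / qB k P) * Real.sqrt (∑ l, ‖c l - cs l‖ ^ 2) := by
      rw [div_mul_eq_mul_div]
      have hnum : 2 * M * (Real.sqrt 2 * Real.sqrt (∑ l, ‖c l - cs l‖ ^ 2))
          ≤ 4 * Real.sqrt 2 * M * Real.sqrt (∑ l, ‖c l - cs l‖ ^ 2) := by
        nlinarith [mul_nonneg (mul_nonneg (Real.sqrt_nonneg 2) hM.le) hsig0]
      gcongr
    linarith

end
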